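/- arXiv:math/0510042 — 2 statements merged into one kernel-verified Lean document; each statement's English description precedes it below -/
import Mathlib

section
/- The function m_β(t) = Σ_{k=0}^∞ ((-t)^k / k!) Π_{j=0}^{k-1} (1 - g(j+β)), where g(λ) = (λ+1)^{-d}, satisfies the delay differential-type renewal equation m_β'(t) = -m_β(t) + E[W^β m_β(tW)], where W is a product of d independent uniform [0,1] random variables, together with the initial condition m_β(0) = 1. -/
open MeasureTheory ProbabilityTheory

lemma aux_integral_finset_prod {Ω : Type*} [MeasurableSpace Ω] {μ : Measure Ω}
    [IsProbabilityMeasure μ] {ι : Type*} (f : ι → Ω → ℝ)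
    (hindep : iIndepFun f μ) (hmeas : ∀ i, Measurable (f i))
    (s : Finset ι) :
    ∫ ω, ∏ i ∈ s, f i ω ∂μ = ∏ i ∈ s, ∫ ω, f i ω ∂μ := by
  classical
  induction s using Finset.cons_induction with
  | empty => simp
  | cons i s hi ih =>
    simp only [Finset.prod_cons]
    have h1 : IndepFun (∏ j ∈ s, f j) (f i) μ :=
      hindep.indepFun_finsetProd_of_notMem hmeas hi
    have hms : Measurable (∏ j ∈ s, f j) := by
      have : (∏ j ∈ s, f j) = fun ω => ∏ j ∈ s, f j ω := by
        funext ω; simp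
      rw [this]
      exact Finset.measurable_prod s fun j _ => hmeas j
    have h2 := h1.symm.integral_mul_eq_mul_integral (hmeas i).aestronglyMeasurable hms.aestronglyMeasurable
    have h3 : (fun ω => f i ω * ∏ j ∈ s, f j ω) = f i * ∏ j ∈ s, f j := by
      funext ω; simp
    have h4 : ∫ ω, (∏ j ∈ s, f j) ω ∂μ = ∫ ω, ∏ j ∈ s, f j ω ∂μ := by
      congr 1; funext ω; simp
    calc ∫ ω, f i ω * ∏ j ∈ s, f j ω ∂μ = integral μ (f i * ∏ j ∈ s, f j) := by rw [← h3]
      _ = integral μ (f i) * integral μ (∏ j ∈ s, f j) := h2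
      _ = (∫ ω, f i ω ∂μ) * ∏ j ∈ s, ∫ ω, f j ω ∂μ := by rw [← ih, ← h4]

lemma aux_unif_moment {Ω : Type*} [MeasurableSpace Ω] {μ : Measure Ω}
    {U : Ω → ℝ} (hU : Measurable U)
    (hunif : Measure.map U μ = volume.restrict (Set.Icc (0:ℝ) 1)) (n : ℕ) :
    ∫ ω, (U ω) ^ n ∂μ = 1 / ((n : ℝ) + 1) := by
  have h1 : ∫ ω, (U ω) ^ n ∂μ = ∫ x, x ^ n ∂(Measure.map U μ) := by
    exact (integral_map hU.aemeasurable
      ((measurable_id.pow_const n : Measurable fun x : ℝ => x ^ n).aestronglyMeasurable)).symm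
  rw [h1, hunif]
  rw [MeasureTheory.integral_Icc_eq_integral_Ioc,
    ← intervalIntegral.integral_of_le zero_le_one, integral_pow]
  norm_num

/-- The series `m_β(t) = Σ_k ((-t)^k/k!) Π_{j<k} (1 - g(j+β))` with `g(λ) = (λ+1)^{-d}`
satisfies `m_β(0) = 1` and the renewal equation `m_β'(t) = -m_β(t) + E[W^β m_β(tW)]`,
where `W` is a product of `d` independent uniform `[0,1]` random variables. -/
theorem renewal_equation_for_m
    {Ω : Type*} [MeasurableSpace Ω] (μ : Measure Ω) [IsProbabilityMeasure μ]
    (d β : ℕ) (hd : 1 ≤ d) (hβ : 1 ≤ β) (U : Fin d → Ω → ℝ)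
    (hmeas : ∀ i, Measurable (U i))
    (hindep : iIndepFun U μ)
    (hunif : ∀ i, Measure.map (U i) μ = volume.restrict (Set.Icc (0:ℝ) 1))
    (m : ℝ → ℝ)
    (hm : ∀ t, m t = ∑' k : ℕ, (-t) ^ k / (Nat.factorial k : ℝ) *
        ∏ j ∈ Finset.range k, (1 - 1 / ((j : ℝ) + β + 1) ^ d)) :
    m 0 = 1 ∧
      ∀ t : ℝ, HasDerivAt m
        (-(m t) + ∫ ω, (∏ i, U i ω) ^ β * m (t * ∏ i, U i ω) ∂μ) t := by
  classical
  -- coefficients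
  set c : ℕ → ℝ := fun k => ∏ j ∈ Finset.range k, (1 - 1 / ((j : ℝ) + β + 1) ^ d) with hcdef
  set b : ℕ → ℝ := fun k => (-1) ^ k / (Nat.factorial k : ℝ) * c k with hbdef
  set gk : ℕ → ℝ := fun k => 1 / ((k : ℝ) + β + 1) ^ d with hgkdef
  have hfactor : ∀ j : ℕ, 0 ≤ 1 - 1 / ((j : ℝ) + β + 1) ^ d ∧
      1 - 1 / ((j : ℝ) + β + 1) ^ d ≤ 1 := by
    intro j
    have hbase : (1:ℝ) ≤ (j : ℝ) + β + 1 := by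
      have : (0:ℝ) ≤ (j : ℝ) + β := by positivity
      linarith
    have hpow : (1:ℝ) ≤ ((j : ℝ) + β + 1) ^ d := one_le_pow₀ hbase
    have h1 : (0:ℝ) < ((j : ℝ) + β + 1) ^ d := by linarith
    constructor
    · have : 1 / ((j : ℝ) + β + 1) ^ d ≤ 1 := by
        rw [div_le_one h1]; exact hpow
      linarith
    · have : 0 ≤ 1 / ((j : ℝ) + β + 1) ^ d := by positivity
      linarith
  have hgk01 : ∀ k, 0 ≤ gk k ∧ gk k ≤ 1 := by
    intro k
    have hbase : (1:ℝ) ≤ (k : ℝ) + β + 1 := by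
      have : (0:ℝ) ≤ (k : ℝ) + β := by positivity
      linarith
    have hpow : (1:ℝ) ≤ ((k : ℝ) + β + 1) ^ d := one_le_pow₀ hbase
    have h1 : (0:ℝ) < ((k : ℝ) + β + 1) ^ d := by linarith
    refine ⟨by positivity, ?_⟩
    rw [hgkdef, div_le_one h1]; exact hpow
  have hc01 : ∀ k, 0 ≤ c k ∧ c k ≤ 1 := by
    intro k
    exact ⟨Finset.prod_nonneg fun j _ => (hfactor j).1,
      Finset.prod_le_one (fun j _ => (hfactor j).1) (fun j _ => (hfactor j).2)⟩
  have hfacpos : ∀ k : ℕ, (0:ℝ) < (Nat.factorial k : ℝ) := fun k => by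
    exact_mod_cast Nat.factorial_pos k
  have hb_le : ∀ k, |b k| ≤ 1 / (Nat.factorial k : ℝ) := by
    intro k
    rw [hbdef]
    simp only [abs_mul, abs_div, abs_pow, abs_neg, abs_one, one_pow]
    rw [abs_of_pos (hfacpos k), abs_of_nonneg (hc01 k).1]
    calc 1 / (Nat.factorial k : ℝ) * c k ≤ 1 / (Nat.factorial k : ℝ) * 1 := by
          apply mul_le_mul_of_nonneg_left (hc01 k).2 (by positivity)
      _ = 1 / (Nat.factorial k : ℝ) := by ring
  -- rewrite m as a plain power series
  have hm' : ∀ z : ℝ, m z = ∑' k : ℕ, b k * z ^ k := by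
    intro z
    rw [hm z]
    apply tsum_congr
    intro k
    rw [hbdef]
    show (-z) ^ k / (Nat.factorial k : ℝ) * c k = (-1) ^ k / (Nat.factorial k : ℝ) * c k * z ^ k
    rw [neg_pow]
    ring
  -- summability
  have S1 : ∀ y : ℝ, Summable fun k : ℕ => b k * y ^ k := by
    intro y
    apply Summable.of_norm_bounded (Real.summable_pow_div_factorial |y|)
    intro k
    rw [norm_mul, norm_pow, Real.norm_eq_abs, Real.norm_eq_abs]
    calc |b k| * |y| ^ k ≤ 1 / (Nat.factorial k : ℝ) * |y| ^ k := by
          apply mul_le_mul_of_nonneg_right (hb_le k) (by positivity)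
      _ = |y| ^ k / (Nat.factorial k : ℝ) := by ring
  have SG : ∀ y : ℝ, Summable fun k : ℕ => b k * gk k * y ^ k := by
    intro y
    apply Summable.of_norm_bounded (Real.summable_pow_div_factorial |y|)
    intro k
    rw [norm_mul, norm_mul, norm_pow, Real.norm_eq_abs, Real.norm_eq_abs, Real.norm_eq_abs]
    have h1 : |gk k| ≤ 1 := by rw [abs_of_nonneg (hgk01 k).1]; exact (hgk01 k).2
    calc |b k| * |gk k| * |y| ^ k ≤ (1 / (Nat.factorial k : ℝ)) * 1 * |y| ^ k := by
          apply mul_le_mul_of_nonneg_right ?_ (by positivity)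
          exact mul_le_mul (hb_le k) h1 (abs_nonneg _) (by positivity)
      _ = |y| ^ k / (Nat.factorial k : ℝ) := by ring
  -- m 0 = 1
  have hm0 : m 0 = 1 := by
    rw [hm' 0]
    rw [tsum_eq_single 0 (by intro k hk; simp [zero_pow hk])]
    simp [hbdef, hcdef]
  refine ⟨hm0, fun t => ?_⟩
  -- the product variable
  set W : Ω → ℝ := fun ω => ∏ i, U i ω with hWdef
  have hWmeas : Measurable W := Finset.measurable_prod Finset.univ fun i _ => hmeas i
  have hWae : ∀ᵐ ω ∂μ, 0 ≤ W ω ∧ W ω ≤ 1 := by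
    have hUi : ∀ i, ∀ᵐ ω ∂μ, U i ω ∈ Set.Icc (0:ℝ) 1 := by
      intro i
      have hs : MeasurableSet (Set.Icc (0:ℝ) 1)ᶜ := measurableSet_Icc.compl
      rw [ae_iff]
      have h0 : {ω | ¬ U i ω ∈ Set.Icc (0:ℝ) 1} = U i ⁻¹' (Set.Icc (0:ℝ) 1)ᶜ := rfl
      rw [h0, ← Measure.map_apply (hmeas i) hs, hunif i, Measure.restrict_apply hs]
      simp
    filter_upwards [ae_all_iff.2 hUi] with ω hω
    exact ⟨Finset.prod_nonneg fun i _ => (hω i).1,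
      Finset.prod_le_one (fun i _ => (hω i).1) (fun i _ => (hω i).2)⟩
  -- moments of W
  have moment : ∀ n : ℕ, ∫ ω, (W ω) ^ n ∂μ = (1 / ((n : ℝ) + 1)) ^ d := by
    intro n
    have h1 : ∀ ω, (W ω) ^ n = ∏ i, (U i ω) ^ n := by
      intro ω; rw [hWdef]; rw [← Finset.prod_pow]
    have hindep' : iIndepFun (fun i ω => (U i ω) ^ n) μ :=
      hindep.comp (fun _ => fun x : ℝ => x ^ n) (fun _ => measurable_id.pow_const n)
    calc ∫ ω, (W ω) ^ n ∂μ = ∫ ω, ∏ i, (U i ω) ^ n ∂μ := by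
          congr 1; funext ω; exact h1 ω
      _ = ∏ i, ∫ ω, (U i ω) ^ n ∂μ :=
          aux_integral_finset_prod (fun i ω => (U i ω) ^ n) hindep'
            (fun i => (hmeas i).pow_const n) Finset.univ
      _ = ∏ _i : Fin d, (1 / ((n : ℝ) + 1)) := by
          apply Finset.prod_congr rfl
          intro i _
          exact aux_unif_moment (hmeas i) (hunif i) n
      _ = (1 / ((n : ℝ) + 1)) ^ d := by
          rw [Finset.prod_const, Finset.card_univ, Fintype.card_fin]
  -- the integral term
  have hpt : ∀ ω, (W ω) ^ β * m (t * W ω) = ∑' k : ℕ, b k * t ^ k * (W ω) ^ (k + β) := by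
    intro ω
    rw [hm' (t * W ω), ← tsum_mul_left]
    apply tsum_congr
    intro k
    rw [mul_pow, pow_add]
    ring
  have hI : (∫ ω, (W ω) ^ β * m (t * W ω) ∂μ) = ∑' k : ℕ, b k * gk k * t ^ k := by
    have hmeas_k : ∀ k : ℕ, AEStronglyMeasurable (fun ω => b k * t ^ k * (W ω) ^ (k + β)) μ :=
      fun k => ((hWmeas.pow_const (k + β)).const_mul _).aestronglyMeasurable
    have hbound : ∑' k : ℕ, ∫⁻ ω, ‖b k * t ^ k * (W ω) ^ (k + β)‖₊ ∂μ ≠ ⊤ := by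
      have hb1 : ∀ k : ℕ, ∫⁻ ω, ‖b k * t ^ k * (W ω) ^ (k + β)‖₊ ∂μ ≤
          ENNReal.ofReal (|t| ^ k / (Nat.factorial k : ℝ)) := by
        intro k
        have hae : ∀ᵐ ω ∂μ, (‖b k * t ^ k * (W ω) ^ (k + β)‖₊ : ENNReal) ≤
            ENNReal.ofReal (|t| ^ k / (Nat.factorial k : ℝ)) := by
          filter_upwards [hWae] with ω hω
          rw [← enorm_eq_nnnorm, ← ofReal_norm]
          apply ENNReal.ofReal_le_ofReal
          have hW01 : |(W ω) ^ (k + β)| ≤ 1 := by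
            rw [abs_pow]
            apply pow_le_one₀ (abs_nonneg _)
            rw [abs_le]; exact ⟨by linarith [hω.1], hω.2⟩
          calc ‖b k * t ^ k * (W ω) ^ (k + β)‖ = |b k| * |t| ^ k * |(W ω) ^ (k + β)| := by
                rw [Real.norm_eq_abs, abs_mul, abs_mul, abs_pow]
            _ ≤ (1 / (Nat.factorial k : ℝ)) * |t| ^ k * 1 := by
                apply mul_le_mul ?_ hW01 (abs_nonneg _) (by positivity)
                exact mul_le_mul_of_nonneg_right (hb_le k) (by positivity)
            _ = |t| ^ k / (Nat.factorial k : ℝ) := by ring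
        calc ∫⁻ ω, ‖b k * t ^ k * (W ω) ^ (k + β)‖₊ ∂μ ≤
              ∫⁻ _ω, ENNReal.ofReal (|t| ^ k / (Nat.factorial k : ℝ)) ∂μ := lintegral_mono_ae hae
          _ = ENNReal.ofReal (|t| ^ k / (Nat.factorial k : ℝ)) := by
              simp [lintegral_const]
      apply ne_top_of_le_ne_top ?_ (ENNReal.tsum_le_tsum hb1)
      rw [← ENNReal.ofReal_tsum_of_nonneg (fun k => by positivity)
        (Real.summable_pow_div_factorial |t|)]
      exact ENNReal.ofReal_ne_top
    calc (∫ ω, (W ω) ^ β * m (t * W ω) ∂μ)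
        = ∫ ω, ∑' k : ℕ, b k * t ^ k * (W ω) ^ (k + β) ∂μ := by
          congr 1; funext ω; exact hpt ω
      _ = ∑' k : ℕ, ∫ ω, b k * t ^ k * (W ω) ^ (k + β) ∂μ := integral_tsum hmeas_k hbound
      _ = ∑' k : ℕ, b k * gk k * t ^ k := by
          apply tsum_congr
          intro k
          rw [MeasureTheory.integral_const_mul, moment (k + β)]
          have hcast : (((k + β : ℕ) : ℝ) + 1) = (k : ℝ) + β + 1 := by push_cast; ring
          rw [hcast, one_div_pow, hgkdef]
          ring
  -- the derivative
  set R : ℝ := |t| + 1 with hRdef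
  have hRpos : (0:ℝ) < R := by positivity
  have htR : |t| < R := by rw [hRdef]; linarith [abs_nonneg t]
  have hbound : ∀ y : ℝ, |y| ≤ R → ∀ k : ℕ,
      ‖b k * ((k : ℝ) * y ^ (k - 1))‖ ≤ 1 / (Nat.factorial k : ℝ) * ((k : ℝ) * R ^ (k - 1)) := by
    intro y hy k
    have h2 : ‖((k : ℝ) * y ^ (k - 1))‖ ≤ (k : ℝ) * R ^ (k - 1) := by
      rw [norm_mul, norm_pow, Real.norm_eq_abs, Real.norm_eq_abs, Nat.abs_cast]
      exact mul_le_mul_of_nonneg_left (pow_le_pow_left₀ (abs_nonneg y) hy _) (Nat.cast_nonneg k)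
    calc ‖b k * ((k : ℝ) * y ^ (k - 1))‖ = ‖b k‖ * ‖((k : ℝ) * y ^ (k - 1))‖ := norm_mul _ _
      _ ≤ 1 / (Nat.factorial k : ℝ) * ((k : ℝ) * R ^ (k - 1)) := by
          apply mul_le_mul ?_ h2 (norm_nonneg _) (by positivity)
          rw [Real.norm_eq_abs]; exact hb_le k
  have hu : Summable (fun k : ℕ => 1 / (Nat.factorial k : ℝ) * ((k : ℝ) * R ^ (k - 1))) := by
    refine (summable_nat_add_iff 1).1 ?_
    apply (Real.summable_pow_div_factorial R).congr
    intro k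
    have hfac : (Nat.factorial (k + 1) : ℝ) = ((k : ℝ) + 1) * (Nat.factorial k : ℝ) := by
      push_cast [Nat.factorial_succ]; ring
    have hk0 : (Nat.factorial k : ℝ) ≠ 0 := ne_of_gt (hfacpos k)
    have hk1 : ((k : ℝ) + 1) ≠ 0 := by positivity
    show R ^ k / (Nat.factorial k : ℝ) =
      1 / (Nat.factorial (k + 1) : ℝ) * (((k : ℕ) + 1 : ℕ) * R ^ (k + 1 - 1))
    rw [hfac]
    push_cast
    field_simp
  have S2 : Summable (fun k : ℕ => b k * ((k : ℝ) * t ^ (k - 1))) :=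
    Summable.of_norm_bounded hu (hbound t (le_of_lt htR))
  have hderiv : HasDerivAt (fun z : ℝ => ∑' k : ℕ, b k * z ^ k)
      (∑' k : ℕ, b k * ((k : ℝ) * t ^ (k - 1))) t := by
    apply hasDerivAt_tsum_of_isPreconnected hu (isOpen_Ioo (a := -R) (b := R))
      ((convex_Ioo (-R) R).isPreconnected)
      (fun k y _ => (hasDerivAt_pow k y).const_mul (b k))
      (fun k y hy => by
        have : |y| ≤ R := le_of_lt (abs_lt.2 ⟨hy.1, hy.2⟩)
        exact hbound y this k)
      (Set.mem_Ioo.2 ⟨by linarith, hRpos⟩) (S1 0)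
      (Set.mem_Ioo.2 (abs_lt.1 htR))
  have hmfun : m = fun z : ℝ => ∑' k : ℕ, b k * z ^ k := funext hm'
  have hD : HasDerivAt m (∑' k : ℕ, b k * ((k : ℝ) * t ^ (k - 1))) t := by
    rw [hmfun]; exact hderiv
  -- identify the derivative value
  have hterm : ∀ k : ℕ, b (k + 1) * (((k : ℝ) + 1) * t ^ k) =
      -(b k * t ^ k) + b k * gk k * t ^ k := by
    intro k
    have h1 : ((k : ℝ) + 1) * b (k + 1) = -(b k) + b k * gk k := by
      have hfac : (Nat.factorial (k + 1) : ℝ) = ((k : ℝ) + 1) * (Nat.factorial k : ℝ) := by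
        push_cast [Nat.factorial_succ]; ring
      have hk0 : (Nat.factorial k : ℝ) ≠ 0 := ne_of_gt (hfacpos k)
      have hk1 : ((k : ℝ) + 1) ≠ 0 := by positivity
      show ((k : ℝ) + 1) * ((-1) ^ (k + 1) / (Nat.factorial (k + 1) : ℝ) * c (k + 1)) =
        -((-1) ^ k / (Nat.factorial k : ℝ) * c k) +
          (-1) ^ k / (Nat.factorial k : ℝ) * c k * gk k
      have hcsucc : c (k + 1) = c k * (1 - gk k) := by
        rw [hcdef, hgkdef]
        exact Finset.prod_range_succ _ k
      rw [hcsucc, hfac, pow_succ]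
      field_simp
      ring
    calc b (k + 1) * (((k : ℝ) + 1) * t ^ k) = (((k : ℝ) + 1) * b (k + 1)) * t ^ k := by ring
      _ = (-(b k) + b k * gk k) * t ^ k := by rw [h1]
      _ = -(b k * t ^ k) + b k * gk k * t ^ k := by ring
  have hval : ∑' k : ℕ, b k * ((k : ℝ) * t ^ (k - 1)) =
      -(m t) + ∑' k : ℕ, b k * gk k * t ^ k := by
    rw [S2.tsum_eq_zero_add]
    have h0 : b 0 * ((0 : ℕ) * t ^ (0 - 1) : ℝ) = 0 := by norm_num
    rw [show (b 0 * (((0 : ℕ) : ℝ) * t ^ (0 - 1))) = 0 by norm_num, zero_add]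
    calc ∑' k : ℕ, b (k + 1) * (((k + 1 : ℕ) : ℝ) * t ^ (k + 1 - 1))
        = ∑' k : ℕ, (-(b k * t ^ k) + b k * gk k * t ^ k) := by
          apply tsum_congr
          intro k
          have : ((k + 1 : ℕ) : ℝ) = (k : ℝ) + 1 := by push_cast; ring
          rw [this]
          exact hterm k
      _ = -(m t) + ∑' k : ℕ, b k * gk k * t ^ k := by
          rw [Summable.tsum_add ((S1 t).neg) (SG t), tsum_neg, hm' t]
  -- conclude
  have : -(m t) + (∫ ω, (W ω) ^ β * m (t * W ω) ∂μ) =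
      ∑' k : ℕ, b k * ((k : ℝ) * t ^ (k - 1)) := by
    rw [hI, hval]
  rw [hWdef] at this
  exact this ▸ hD
end

section
/- For d = 2 the formula p_n = Σ_{k=0}^{n-1} C(n-1,k) (-1)^k Π_{j=0}^{k-1}(1 - g(j+1)) with g(λ) = (λ+1)^{-2} yields p_n = 1/(2n) for all n ≥ 2 (and p_1 = 1). -/
open Finset

lemma prod_closed (k : ℕ) :
    ∏ j ∈ Finset.range k, (1 - 1 / ((j : ℝ) + 2) ^ 2) = ((k : ℝ) + 2) / (2 * (k + 1)) := by
  induction k with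
  | zero => norm_num
  | succ k ih =>
    rw [Finset.prod_range_succ, ih]
    have h1 : (k : ℝ) + 1 ≠ 0 := by positivity
    have h2 : (k : ℝ) + 2 ≠ 0 := by positivity
    push_cast
    field_simp
    ring

lemma alt_sum (m : ℕ) (hm : 1 ≤ m) :
    ∑ k ∈ Finset.range (m + 1), ((m.choose k : ℝ)) * (-1) ^ k = 0 := by
  have := Int.alternating_sum_range_choose (n := m)
  rw [if_neg (by omega)] at this
  have := congrArg (fun z : ℤ => (z : ℝ)) this
  push_cast at this
  rw [← this]
  apply Finset.sum_congr rfl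
  intros; ring

lemma alt_sum_div (m : ℕ) :
    ∑ k ∈ Finset.range (m + 1), ((m.choose k : ℝ)) * (-1) ^ k / (k + 1)
      = 1 / (m + 1) := by
  have key : ∀ k : ℕ, ((m.choose k : ℝ)) / (k + 1) = ((m+1).choose (k+1) : ℝ) / (m + 1) := by
    intro k
    have h := Nat.add_one_mul_choose_eq m k
    have h' : ((m : ℝ) + 1) * (m.choose k : ℝ) = ((m+1).choose (k+1) : ℝ) * (k + 1) := by
      exact_mod_cast congrArg (fun z : ℕ => (z : ℝ)) h
    have hk : (k : ℝ) + 1 ≠ 0 := by positivity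
    have hm : (m : ℝ) + 1 ≠ 0 := by positivity
    field_simp
    linarith [h']
  have hshift : ∑ k ∈ Finset.range (m + 1), ((m+1).choose (k+1) : ℝ) * (-1) ^ k = 1 := by
    have h0 := Int.alternating_sum_range_choose (n := m + 1)
    rw [if_neg (by omega)] at h0
    have h0' : (((∑ i ∈ Finset.range (m + 1 + 1), (-1) ^ i * ((m+1).choose i : ℤ) : ℤ)) : ℝ) = 0 := by
      exact_mod_cast congrArg (fun z : ℤ => (z : ℝ)) h0
    push_cast at h0'
    rw [Finset.sum_range_succ'] at h0'
    simp at h0'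
    have : ∑ i ∈ Finset.range (m + 1), (-1 : ℝ) ^ (i + 1) * ((m+1).choose (i+1) : ℝ) = -1 := by
      linarith [h0']
    calc ∑ k ∈ Finset.range (m + 1), ((m+1).choose (k+1) : ℝ) * (-1) ^ k
        = -∑ i ∈ Finset.range (m + 1), (-1 : ℝ) ^ (i + 1) * ((m+1).choose (i+1) : ℝ) := by
          rw [← Finset.sum_neg_distrib]
          apply Finset.sum_congr rfl
          intros; ring
      _ = 1 := by rw [this]; ring
  calc ∑ k ∈ Finset.range (m + 1), ((m.choose k : ℝ)) * (-1) ^ k / (k + 1)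
      = ∑ k ∈ Finset.range (m + 1), ((m+1).choose (k+1) : ℝ) * (-1) ^ k / (m + 1) := by
        apply Finset.sum_congr rfl
        intro k _
        rw [mul_comm ((m.choose k : ℝ)) ((-1:ℝ) ^ k), mul_div_assoc, key k]
        ring
    _ = (∑ k ∈ Finset.range (m + 1), ((m+1).choose (k+1) : ℝ) * (-1) ^ k) / (m + 1) := by
        rw [← Finset.sum_div]
    _ = 1 / (m + 1) := by rw [hshift]

/-- For `d = 2` (so `g(λ) = 1/(λ+1)^2`), the chain-record probability formula
`p_n = Σ_{k=0}^{n-1} C(n-1,k)(-1)^k Π_{j=0}^{k-1}(1 - g(j+1))` yields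
`p_1 = 1` and `p_n = 1/(2n)` for `n ≥ 2`. -/
theorem chain_record_prob_dim_two :
    (∑ k ∈ Finset.range 1, ((0).choose k : ℝ) * (-1) ^ k *
        ∏ j ∈ Finset.range k, (1 - 1 / ((j : ℝ) + 2) ^ 2) = 1) ∧
    ∀ n : ℕ, 2 ≤ n →
      ∑ k ∈ Finset.range n, ((n - 1).choose k : ℝ) * (-1) ^ k *
          ∏ j ∈ Finset.range k, (1 - 1 / ((j : ℝ) + 2) ^ 2) = 1 / (2 * n) := by
  constructor
  · simp
  · intro n hn
    obtain ⟨m, rfl⟩ : ∃ m, n = m + 1 := ⟨n - 1, by omega⟩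
    have hm : 1 ≤ m := by omega
    simp only [Nat.add_sub_cancel]
    have expand : ∀ k ∈ Finset.range (m + 1),
        ((m.choose k : ℝ)) * (-1) ^ k * ∏ j ∈ Finset.range k, (1 - 1 / ((j : ℝ) + 2) ^ 2)
        = (1/2) * (((m.choose k : ℝ)) * (-1) ^ k)
          + (1/2) * (((m.choose k : ℝ)) * (-1) ^ k / (k + 1)) := by
      intro k _
      rw [prod_closed k]
      have hk : (k : ℝ) + 1 ≠ 0 := by positivity
      field_simp
      ring
    rw [Finset.sum_congr rfl expand, Finset.sum_add_distrib, ← Finset.mul_sum, ← Finset.mul_sum,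
      alt_sum m hm, alt_sum_div m]
    push_cast
    have : (m : ℝ) + 1 ≠ 0 := by positivity
    field_simp
    ring
end
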